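/- Let φ : ℝ² → ℝ be a C² scalar function compactly supported in 𝔻. Then for all x ∈ ℝ²: L₁¹(∇φ)(x) = ∫₀^∞ φ(x + t·u(x)) dt − ∫₀^∞ φ(x + t·v(x)) dt, i.e. the first moment longitudinal V-line transform of the gradient field ∇φ equals the weighted V-line transform V₋₁φ of φ with weight α = −1. -/

import Mathlib

open MeasureTheory

noncomputable section

/-- Euclidean dot product on `ℝ × ℝ`. -/
def dot (a b : ℝ × ℝ) : ℝ := a.1 * b.1 + a.2 * b.2

/-- Rotation by `π/2`: `w⊥ = (−w₂, w₁)`. -/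
def perp (w : ℝ × ℝ) : ℝ × ℝ := (-w.2, w.1)

/-- The open unit disc in `ℝ²`. -/
def disc : Set (ℝ × ℝ) := {p : ℝ × ℝ | p.1 ^ 2 + p.2 ^ 2 < 1}

/-- Gradient of a scalar function on `ℝ²`. -/
def grad (φ : ℝ × ℝ → ℝ) (x : ℝ × ℝ) : ℝ × ℝ :=
  (fderiv ℝ φ x (1, 0), fderiv ℝ φ x (0, 1))

/-- First moment longitudinal V-line transform with weight `α = 1`. -/
def L1m (u v : ℝ × ℝ → ℝ × ℝ) (f : ℝ × ℝ → ℝ × ℝ) (x : ℝ × ℝ) : ℝ :=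
  (- ∫ t in Set.Ioi (0 : ℝ), t * dot (u x) (f (x + t • u x))) +
    ∫ t in Set.Ioi (0 : ℝ), t * dot (v x) (f (x + t • v x))

open Set Filter Topology in
lemma key (φ : ℝ × ℝ → ℝ) (hφ : ContDiff ℝ 2 φ) (hcs : HasCompactSupport φ)
    (x w : ℝ × ℝ) (hw : w ≠ 0) :
    ∫ t in Set.Ioi (0:ℝ), t * dot w (grad φ (x + t • w)) =
      - ∫ t in Set.Ioi (0:ℝ), φ (x + t • w) := by
  have hφd : Differentiable ℝ φ := hφ.differentiable (by norm_num)
  set g : ℝ → ℝ := fun t => φ (x + t • w) with hg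
  set g' : ℝ → ℝ := fun t => dot w (grad φ (x + t • w)) with hg'
  have hlc : Continuous fun t : ℝ => x + t • w := by continuity
  -- derivative of g
  have hline : ∀ t : ℝ, HasDerivAt (fun s : ℝ => x + s • w) w t := by
    intro t
    simpa using ((hasDerivAt_id t).smul_const w).const_add x
  have hfd : ∀ y : ℝ × ℝ, fderiv ℝ φ y w = dot w (grad φ y) := by
    intro y
    have h1 : (fderiv ℝ φ y) w
        = (fderiv ℝ φ y) (w.1 • ((1:ℝ),(0:ℝ)) + w.2 • ((0:ℝ),(1:ℝ))) := by
      congr 1; simp [Prod.ext_iff]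
    rw [h1, map_add, (fderiv ℝ φ y).map_smul, (fderiv ℝ φ y).map_smul]
    simp [dot, grad, smul_eq_mul]
  have hderiv : ∀ t : ℝ, HasDerivAt g (g' t) t := by
    intro t
    have := ((hφd (x + t • w)).hasFDerivAt).comp_hasDerivAt t (hline t)
    rw [hfd] at this; exact this
  -- continuity
  have hgc : Continuous g := hφ.continuous.comp hlc
  have hgradc : Continuous (grad φ) := by
    have h1 : Continuous (fderiv ℝ φ) := (hφ.fderiv_right (m := 1) (by norm_num)).continuous
    exact (h1.clm_apply continuous_const).prodMk (h1.clm_apply continuous_const)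
  have hg'c : Continuous g' := by
    simp only [hg', dot]
    exact (continuous_const.mul ((hgradc.comp hlc).fst)).add
      (continuous_const.mul ((hgradc.comp hlc).snd))
  -- compact support bound
  obtain ⟨R, hR⟩ := (hcs.isCompact.isBounded).subset_closedBall 0
  have hwpos : (0:ℝ) < ‖w‖ := norm_pos_iff.mpr hw
  set T : ℝ := (R + ‖x‖) / ‖w‖ with hT
  have hvan : ∀ t : ℝ, T < |t| → (x + t • w) ∉ tsupport φ := by
    intro t ht hmem
    have h1 : ‖x + t • w‖ ≤ R := by simpa using hR hmem
    have h2 : ‖t • w‖ ≤ ‖x + t • w‖ + ‖x‖ := by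
      have := norm_sub_le (x + t • w) x
      simpa [add_sub_cancel_left] using this
    have h3 : |t| * ‖w‖ ≤ R + ‖x‖ := by
      have := norm_smul t w
      rw [Real.norm_eq_abs] at this
      linarith [this ▸ (h2.trans (by linarith : ‖x + t • w‖ + ‖x‖ ≤ R + ‖x‖))]
    have h4 : |t| ≤ T := by
      rw [hT, le_div_iff₀ hwpos]; exact h3
    linarith
  have hvan' : ∀ t : ℝ, t ∉ Set.Icc (-T) T → T < |t| := by
    intro t ht
    rw [Set.mem_Icc, ← abs_le, not_le] at ht
    exact ht
  have hgsupp : HasCompactSupport g :=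
    HasCompactSupport.intro isCompact_Icc fun t ht =>
      show φ (x + t • w) = 0 from image_eq_zero_of_notMem_tsupport (hvan t (hvan' t ht))
  have htg'supp : HasCompactSupport (fun t => t * g' t) :=
    HasCompactSupport.intro isCompact_Icc fun t ht => by
      have h0 : fderiv ℝ φ (x + t • w) = 0 :=
        fderiv_of_notMem_tsupport ℝ (hvan t (hvan' t ht))
      simp [hg', dot, grad, h0]
  have hgint : IntegrableOn g (Set.Ioi 0) :=
    (hgc.integrable_of_hasCompactSupport hgsupp).integrableOn
  have htg'int : IntegrableOn (fun t => t * g' t) (Set.Ioi 0) :=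
    ((continuous_id.mul hg'c).integrable_of_hasCompactSupport htg'supp).integrableOn
  set F : ℝ → ℝ := fun t => t * g t with hF
  have hFderiv : ∀ t : ℝ, HasDerivAt F (g t + t * g' t) t := by
    intro t
    have := (hasDerivAt_id' t).mul (hderiv t)
    simp only [one_mul] at this; exact this
  have hFcont : ContinuousWithinAt F (Set.Ici 0) 0 :=
    ((continuous_id.mul hgc).continuousAt).continuousWithinAt
  have hFtend : Tendsto F atTop (𝓝 0) := by
    apply Tendsto.congr' _ tendsto_const_nhds
    filter_upwards [eventually_gt_atTop (max T 0)] with t ht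
    have : g t = 0 := show φ (x + t • w) = 0 from image_eq_zero_of_notMem_tsupport
      (hvan t (by rw [abs_of_pos (lt_of_le_of_lt (le_max_right T 0) ht)]
                  exact lt_of_le_of_lt (le_max_left T 0) ht))
    simp [hF, this]
  have hint : IntegrableOn (fun t => g t + t * g' t) (Set.Ioi 0) := hgint.add htg'int
  have hmain := integral_Ioi_of_hasDerivAt_of_tendsto hFcont
    (fun t _ => hFderiv t) hint hFtend
  rw [integral_add hgint htg'int] at hmain
  simp only [hF, zero_mul, sub_zero, zero_sub] at hmain
  have : (∫ t in Set.Ioi (0:ℝ), g t) + ∫ t in Set.Ioi (0:ℝ), t * g' t = 0 := by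
    simpa using hmain
  have heq : ∀ t : ℝ, t * g' t = t * dot w (grad φ (x + t • w)) := fun t => rfl
  linarith [this]

theorem stmt10
    (u v : ℝ × ℝ → ℝ × ℝ) (hu : ContDiff ℝ 1 u) (hv : ContDiff ℝ 1 v)
    (hunitu : ∀ x, dot (u x) (u x) = 1) (hunitv : ∀ x, dot (v x) (v x) = 1)
    (hlineu : ∀ (x : ℝ × ℝ) (t : ℝ), 0 ≤ t → u (x + t • u x) = u x)
    (hlinev : ∀ (x : ℝ × ℝ) (t : ℝ), 0 ≤ t → v (x + t • v x) = v x)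
    (hind : ∀ x, LinearIndependent ℝ ![u x, v x])
    (φ : ℝ × ℝ → ℝ) (hφ : ContDiff ℝ 2 φ)
    (hcs : HasCompactSupport φ) (hsupp : tsupport φ ⊆ disc) :
    ∀ x, L1m u v (grad φ) x =
      (∫ t in Set.Ioi (0 : ℝ), φ (x + t • u x)) -
        ∫ t in Set.Ioi (0 : ℝ), φ (x + t • v x) := by
  intro x
  have hwu : u x ≠ 0 := by
    intro h
    have := hunitu x
    rw [h] at this
    simp [dot] at this
  have hwv : v x ≠ 0 := by
    intro h
    have := hunitv x
    rw [h] at this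
    simp [dot] at this
  unfold L1m
  rw [key φ hφ hcs x (u x) hwu, key φ hφ hcs x (v x) hwv]
  ring
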